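/- Let k : ℝ × ℝ → ℂ be measurable with |k(s, t)| ≤ C for almost every (s, t) and some constant C ≥ 0, and let u, v ∈ L²(ℝ, ℂ) vanish almost everywhere outside [0, 1]. Then the function B(t) := ∫_ℝ k(s, t) u(s) v(t − s) ds is defined for almost every t, belongs to L²(ℝ, ℂ), and satisfies ‖B‖_{L²} ≤ C ‖u‖_{L²} ‖v‖_{L²}. (Boundedness of the kernel-based bilinear convolution operator.) -/

import Mathlib

open MeasureTheory
open scoped ENNReal NNReal

/-- **Boundedness of the kernel-based bilinear convolution operator.**
Let `k : ℝ × ℝ → ℂ` be measurable with `‖k‖ ≤ C` a.e., and let `u, v ∈ L²(ℝ, ℂ)`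
vanish a.e. outside `[0, 1]`.  Then `B t := ∫ k (s, t) u s v (t − s) ds` is defined for
a.e. `t`, belongs to `L²(ℝ, ℂ)`, and `‖B‖_{L²} ≤ C ‖u‖_{L²} ‖v‖_{L²}`. -/
theorem kernel_bilinear_convolution_bounded
    (k : ℝ × ℝ → ℂ) (hk : Measurable k)
    (C : ℝ) (hC : 0 ≤ C) (hkbdd : ∀ᵐ p : ℝ × ℝ ∂volume, ‖k p‖ ≤ C)
    (u v : ℝ → ℂ)
    (hu : MemLp u 2 volume) (hv : MemLp v 2 volume)
    (husupp : ∀ᵐ t ∂volume, t ∉ Set.Icc (0 : ℝ) 1 → u t = 0)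
    (hvsupp : ∀ᵐ t ∂volume, t ∉ Set.Icc (0 : ℝ) 1 → v t = 0) :
    (∀ᵐ t ∂volume, Integrable (fun s => k (s, t) * u s * v (t - s)) volume) ∧
    MemLp (fun t => ∫ s, k (s, t) * u s * v (t - s) ∂volume) 2 volume ∧
    eLpNorm (fun t => ∫ s, k (s, t) * u s * v (t - s) ∂volume) 2 volume ≤
      ENNReal.ofReal C * eLpNorm u 2 volume * eLpNorm v 2 volume := by
  classical
  have hsq : ∀ x : ℝ≥0∞, x ^ (2 : ℝ) = x * x := fun x => by
    rw [show (2 : ℝ) = ((2 : ℕ) : ℝ) by norm_num, ENNReal.rpow_natCast, sq]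
  obtain ⟨u', hu'm, hu'eq⟩ : ∃ u' : ℝ → ℂ, Measurable u' ∧ u =ᵐ[volume] u' :=
    ⟨hu.1.mk u, hu.1.stronglyMeasurable_mk.measurable, hu.1.ae_eq_mk⟩
  obtain ⟨v', hv'm, hv'eq⟩ : ∃ v' : ℝ → ℂ, Measurable v' ∧ v =ᵐ[volume] v' :=
    ⟨hv.1.mk v, hv.1.stronglyMeasurable_mk.measurable, hv.1.ae_eq_mk⟩
  set f : ℝ → ℝ≥0∞ := fun s => (‖u' s‖₊ : ℝ≥0∞) with hf_def
  set g : ℝ → ℝ≥0∞ := fun s => (‖v' s‖₊ : ℝ≥0∞) with hg_def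
  have hfm : Measurable f := hu'm.enorm
  have hgm : Measurable g := hv'm.enorm
  set Nu := eLpNorm u 2 volume with hNu_def
  set Nv := eLpNorm v 2 volume with hNv_def
  set A := ∫⁻ s, f s ^ (2 : ℝ) ∂volume with hA_def
  set Bg := ∫⁻ s, g s ^ (2 : ℝ) ∂volume with hBg_def
  set If := ∫⁻ s, f s ∂volume with hIf_def
  set Φ : ℝ → ℝ≥0∞ := fun t => ∫⁻ s, f s * g (t - s) ∂volume with hΦ_def
  set Ψ : ℝ → ℝ≥0∞ := fun t => ∫⁻ s, f s * g (t - s) ^ (2 : ℝ) ∂volume with hΨ_def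
  have hNuA : Nu = A ^ ((1 : ℝ)/2) := by
    rw [hNu_def, eLpNorm_congr_ae hu'eq,
      eLpNorm_eq_lintegral_rpow_enorm_toReal (by norm_num) (by norm_num)]
    norm_num [hA_def]
    rfl
  have hNvB : Nv = Bg ^ ((1 : ℝ)/2) := by
    rw [hNv_def, eLpNorm_congr_ae hv'eq,
      eLpNorm_eq_lintegral_rpow_enorm_toReal (by norm_num) (by norm_num)]
    norm_num [hBg_def]
    rfl
  have hANu : A = Nu ^ (2 : ℝ) := by
    rw [hNuA, ← ENNReal.rpow_mul]; norm_num
  have hBNv : Bg = Nv ^ (2 : ℝ) := by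
    rw [hNvB, ← ENNReal.rpow_mul]; norm_num
  have hNu_lt : Nu < ⊤ := hu.2
  have hNv_lt : Nv < ⊤ := hv.2
  have hA_ne : A ≠ ⊤ := by
    rw [hANu]; exact ENNReal.rpow_ne_top_of_nonneg (by norm_num) hNu_lt.ne
  have hBg_ne : Bg ≠ ⊤ := by
    rw [hBNv]; exact ENNReal.rpow_ne_top_of_nonneg (by norm_num) hNv_lt.ne
  have h22 : Real.HolderConjugate 2 2 := Real.HolderConjugate.two_two
  have hu'supp : ∀ᵐ s ∂volume, s ∉ Set.Icc (0 : ℝ) 1 → u' s = 0 := by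
    filter_upwards [husupp, hu'eq] with s h1 h2 hs
    rw [← h2]; exact h1 hs
  -- L¹-norm of `u` is bounded by its L²-norm, by Cauchy-Schwarz on `[0,1]`
  have hIf : If ≤ Nu := by
    set ind : ℝ → ℝ≥0∞ := (Set.Icc (0 : ℝ) 1).indicator fun _ => 1 with hind_def
    have hindm : Measurable ind := measurable_one.indicator measurableSet_Icc
    have h1 : If = ∫⁻ s, (f * ind) s ∂volume := by
      refine lintegral_congr_ae ?_
      filter_upwards [hu'supp] with s hs
      by_cases h : s ∈ Set.Icc (0 : ℝ) 1
      · simp [hind_def, Set.indicator_of_mem h]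
      · simp [hf_def, hind_def, Set.indicator_of_notMem h, hs h]
    have h2 : ∫⁻ s, ind s ^ (2 : ℝ) ∂volume = 1 := by
      have hpt : ∀ s, ind s ^ (2 : ℝ) = ind s := fun s => by
        by_cases h : s ∈ Set.Icc (0 : ℝ) 1 <;>
          simp [hind_def, Set.indicator_of_mem, Set.indicator_of_notMem, h,
            ENNReal.zero_rpow_of_pos]
      rw [lintegral_congr hpt, hind_def, lintegral_indicator measurableSet_Icc _]
      simp [Real.volume_Icc]
    calc If = ∫⁻ s, (f * ind) s ∂volume := h1
      _ ≤ (∫⁻ s, f s ^ (2 : ℝ) ∂volume) ^ ((1:ℝ)/2) * (∫⁻ s, ind s ^ (2 : ℝ) ∂volume) ^ ((1:ℝ)/2) :=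
        ENNReal.lintegral_mul_le_Lp_mul_Lq volume h22 hfm.aemeasurable hindm.aemeasurable
      _ = Nu := by rw [h2, ← hA_def, ← hNuA]; simp
  have hIf_ne : If ≠ ⊤ := (lt_of_le_of_lt hIf hNu_lt).ne
  -- pointwise Cauchy-Schwarz
  have hCS : ∀ t, Φ t ^ (2 : ℝ) ≤ If * Ψ t := by
    intro t
    have hgt : Measurable fun s => g (t - s) := hgm.comp (measurable_const.sub measurable_id)
    have key : Φ t ≤ If ^ ((1:ℝ)/2) * Ψ t ^ ((1:ℝ)/2) := by
      have h1 : Φ t = ∫⁻ s,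
          ((fun s => f s ^ ((1:ℝ)/2)) * fun s => f s ^ ((1:ℝ)/2) * g (t - s)) s ∂volume := by
        refine lintegral_congr fun s => ?_
        simp only [Pi.mul_apply]
        rw [← mul_assoc, ← ENNReal.rpow_add_of_nonneg _ _ (by norm_num) (by norm_num)]
        norm_num
      have h2 := ENNReal.lintegral_mul_le_Lp_mul_Lq volume h22
        (hfm.pow_const ((1:ℝ)/2)).aemeasurable
        ((hfm.pow_const ((1:ℝ)/2)).mul hgt).aemeasurable
      rw [h1]
      refine h2.trans (le_of_eq ?_)
      congr 1
      · congr 1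
        refine lintegral_congr fun s => ?_
        rw [← ENNReal.rpow_mul]
        norm_num
      · congr 1
        refine lintegral_congr fun s => ?_
        simp only [Pi.mul_apply]
        rw [ENNReal.mul_rpow_of_nonneg _ _ (by norm_num : (0:ℝ) ≤ 2), ← ENNReal.rpow_mul]
        norm_num
    calc Φ t ^ (2 : ℝ) ≤ (If ^ ((1:ℝ)/2) * Ψ t ^ ((1:ℝ)/2)) ^ (2 : ℝ) :=
        ENNReal.rpow_le_rpow key (by norm_num)
      _ = If * Ψ t := by
        rw [ENNReal.mul_rpow_of_nonneg _ _ (by norm_num : (0:ℝ) ≤ 2),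
          ← ENNReal.rpow_mul, ← ENNReal.rpow_mul]
        norm_num
  -- Tonelli plus translation invariance
  have hFm : Measurable fun p : ℝ × ℝ => f p.2 * g (p.1 - p.2) ^ (2 : ℝ) :=
    (hfm.comp measurable_snd).mul
      ((hgm.comp (measurable_fst.sub measurable_snd)).pow_const _)
  have hTon : ∫⁻ t, Ψ t ∂volume = If * Bg := by
    have hswap : ∫⁻ t, Ψ t ∂volume
        = ∫⁻ s, ∫⁻ t, f s * g (t - s) ^ (2 : ℝ) ∂volume ∂volume :=
      lintegral_lintegral_swap hFm.aemeasurable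
    rw [hswap]
    have inner : ∀ s : ℝ, ∫⁻ t, f s * g (t - s) ^ (2 : ℝ) ∂volume = f s * Bg := by
      intro s
      have hmt : Measurable fun t : ℝ => g (t - s) ^ (2 : ℝ) :=
        (hgm.comp (measurable_id.sub measurable_const)).pow_const _
      rw [lintegral_const_mul _ hmt]
      congr 1
      exact (measurePreserving_sub_right volume s).lintegral_comp (hgm.pow_const _)
    simp_rw [inner]
    exact lintegral_mul_const _ hfm
  -- the kernel bound, sliced
  have hk' : ∀ᵐ t ∂volume, ∀ᵐ s ∂volume, ‖k (s, t)‖ ≤ C := by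
    have h1 : ∀ᵐ p : ℝ × ℝ ∂(volume.prod volume), ‖k p‖ ≤ C := by
      rw [← Measure.volume_eq_prod]; exact hkbdd
    have h2 : ∀ᵐ p : ℝ × ℝ ∂(volume.prod volume), ‖k p.swap‖ ≤ C :=
      Measure.measurePreserving_swap.quasiMeasurePreserving.ae h1
    exact Measure.ae_ae_of_ae_prod h2
  have hbound : ∀ᵐ t ∂volume,
      (∫⁻ s, (‖k (s, t) * u' s * v' (t - s)‖₊ : ℝ≥0∞) ∂volume) ≤ ENNReal.ofReal C * Φ t := by
    filter_upwards [hk'] with t hkt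
    have hptwise : ∀ᵐ s ∂volume, (‖k (s, t) * u' s * v' (t - s)‖₊ : ℝ≥0∞)
        ≤ ENNReal.ofReal C * (f s * g (t - s)) := by
      filter_upwards [hkt] with s hs
      have hknorm : (‖k (s, t)‖₊ : ℝ≥0∞) ≤ ENNReal.ofReal C := by
        rw [← enorm_eq_nnnorm, ← ofReal_norm]
        exact ENNReal.ofReal_le_ofReal hs
      calc (‖k (s, t) * u' s * v' (t - s)‖₊ : ℝ≥0∞)
          = (‖k (s, t)‖₊ : ℝ≥0∞) * (f s * g (t - s)) := by
            simp [nnnorm_mul, ENNReal.coe_mul, mul_assoc, hf_def, hg_def]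
        _ ≤ ENNReal.ofReal C * (f s * g (t - s)) := mul_le_mul_left hknorm _
    calc (∫⁻ s, (‖k (s, t) * u' s * v' (t - s)‖₊ : ℝ≥0∞) ∂volume)
        ≤ ∫⁻ s, ENNReal.ofReal C * (f s * g (t - s)) ∂volume := lintegral_mono_ae hptwise
      _ = ENNReal.ofReal C * Φ t := lintegral_const_mul' _ _ ENNReal.ofReal_ne_top
  have hΨm : Measurable Ψ := hFm.lintegral_prod_right'
  have hΨtot : ∫⁻ t, Ψ t ∂volume ≠ ⊤ := by
    rw [hTon]; exact ENNReal.mul_ne_top hIf_ne hBg_ne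
  have hΨfin : ∀ᵐ t ∂volume, Ψ t < ⊤ := ae_lt_top hΨm hΨtot
  have hΦfin : ∀ᵐ t ∂volume, Φ t < ⊤ := by
    filter_upwards [hΨfin] with t ht
    have h2 : Φ t ^ (2 : ℝ) < ⊤ :=
      lt_of_le_of_lt (hCS t) (ENNReal.mul_lt_top hIf_ne.lt_top ht)
    exact (ENNReal.rpow_lt_top_iff_of_pos (by norm_num)).mp h2
  -- ae-equality between primed and unprimed integrands, per `t`
  have haeeq : ∀ t : ℝ, (fun s => k (s, t) * u s * v (t - s)) =ᵐ[volume]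
      fun s => k (s, t) * u' s * v' (t - s) := by
    intro t
    have hv2 : (fun s => v (t - s)) =ᵐ[volume] fun s => v' (t - s) :=
      (Measure.measurePreserving_sub_left volume t).quasiMeasurePreserving.ae_eq hv'eq
    filter_upwards [hu'eq, hv2] with s h1 h2
    rw [h1, h2]
  have hmeas_t : ∀ t : ℝ, Measurable fun s => k (s, t) * u' s * v' (t - s) := fun t =>
    ((hk.comp (measurable_id.prodMk measurable_const)).mul hu'm).mul
      (hv'm.comp (measurable_const.sub measurable_id))
  have hint : ∀ᵐ t ∂volume, Integrable (fun s => k (s, t) * u s * v (t - s)) volume := by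
    filter_upwards [hbound, hΦfin] with t hb hΦt
    have hi : Integrable (fun s => k (s, t) * u' s * v' (t - s)) volume := by
      refine ⟨(hmeas_t t).aestronglyMeasurable, ?_⟩
      exact lt_of_le_of_lt hb (ENNReal.mul_lt_top ENNReal.ofReal_lt_top hΦt)
    exact hi.congr (haeeq t).symm
  set B' : ℝ → ℂ := fun t => ∫ s, k (s, t) * u' s * v' (t - s) ∂volume with hB'_def
  have hBeq : (fun t => ∫ s, k (s, t) * u s * v (t - s) ∂volume) = B' := by
    funext t
    exact integral_congr_ae (haeeq t)
  have hFm2 : Measurable fun p : ℝ × ℝ => k p * u' p.1 * v' (p.2 - p.1) :=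
    (hk.mul (hu'm.comp measurable_fst)).mul (hv'm.comp (measurable_snd.sub measurable_fst))
  have hB'sm : AEStronglyMeasurable B' volume :=
    hFm2.stronglyMeasurable.integral_prod_left'.aestronglyMeasurable
  have hB'bound : ∀ᵐ t ∂volume, (‖B' t‖₊ : ℝ≥0∞) ≤ ENNReal.ofReal C * Φ t := by
    filter_upwards [hbound] with t ht
    exact le_trans (enorm_integral_le_lintegral_enorm _) ht
  have hKey : ∫⁻ t, (‖B' t‖₊ : ℝ≥0∞) ^ (2 : ℝ) ∂volume ≤
      (ENNReal.ofReal C * Nu * Nv) ^ (2 : ℝ) := by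
    have step1 : ∫⁻ t, Φ t ^ (2 : ℝ) ∂volume ≤ If * (If * Bg) := by
      calc ∫⁻ t, Φ t ^ (2 : ℝ) ∂volume ≤ ∫⁻ t, If * Ψ t ∂volume := lintegral_mono fun t => hCS t
        _ = If * ∫⁻ t, Ψ t ∂volume := lintegral_const_mul' _ _ hIf_ne
        _ = If * (If * Bg) := by rw [hTon]
    calc ∫⁻ t, (‖B' t‖₊ : ℝ≥0∞) ^ (2 : ℝ) ∂volume
        ≤ ∫⁻ t, (ENNReal.ofReal C * Φ t) ^ (2 : ℝ) ∂volume := by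
          refine lintegral_mono_ae ?_
          filter_upwards [hB'bound] with t ht
          exact ENNReal.rpow_le_rpow ht (by norm_num)
      _ = ∫⁻ t, ENNReal.ofReal C ^ (2 : ℝ) * Φ t ^ (2 : ℝ) ∂volume := by
          simp_rw [ENNReal.mul_rpow_of_nonneg _ _ (by norm_num : (0:ℝ) ≤ 2)]
      _ = ENNReal.ofReal C ^ (2 : ℝ) * ∫⁻ t, Φ t ^ (2 : ℝ) ∂volume :=
          lintegral_const_mul' _ _
            (ENNReal.rpow_ne_top_of_nonneg (by norm_num) ENNReal.ofReal_ne_top)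
      _ ≤ ENNReal.ofReal C ^ (2 : ℝ) * (If * (If * Bg)) := mul_le_mul_right step1 _
      _ ≤ ENNReal.ofReal C ^ (2 : ℝ) * (Nu * (Nu * Nv ^ (2 : ℝ))) :=
          mul_le_mul_right (mul_le_mul' hIf (mul_le_mul' hIf hBNv.le)) _
      _ = (ENNReal.ofReal C * Nu * Nv) ^ (2 : ℝ) := by
          rw [ENNReal.mul_rpow_of_nonneg _ _ (by norm_num : (0:ℝ) ≤ 2),
            ENNReal.mul_rpow_of_nonneg _ _ (by norm_num : (0:ℝ) ≤ 2)]
          simp_rw [hsq]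
          ring
  have hfinal : eLpNorm B' 2 volume ≤ ENNReal.ofReal C * Nu * Nv := by
    rw [eLpNorm_eq_lintegral_rpow_enorm_toReal (by norm_num) (by norm_num)]
    have htr : ((2 : ℝ≥0∞)).toReal = (2 : ℝ) := by simp
    rw [htr]
    calc (∫⁻ t, (‖B' t‖₊ : ℝ≥0∞) ^ (2 : ℝ) ∂volume) ^ ((1:ℝ)/2)
        ≤ ((ENNReal.ofReal C * Nu * Nv) ^ (2 : ℝ)) ^ ((1:ℝ)/2) :=
          ENNReal.rpow_le_rpow hKey (by norm_num)
      _ = ENNReal.ofReal C * Nu * Nv := by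
          rw [← ENNReal.rpow_mul]; norm_num
  refine ⟨hint, ?_, ?_⟩
  · rw [hBeq]
    exact ⟨hB'sm, lt_of_le_of_lt hfinal
      (ENNReal.mul_lt_top (ENNReal.mul_lt_top ENNReal.ofReal_lt_top hNu_lt) hNv_lt)⟩
  · rw [hBeq]
    exact hfinal
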